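/- Suppose n ≥ 3 and f,g:[n]→[n] are fixed-point-free functions with f(i) ≠ g(i) for all i, such that: (1) neither G_f nor G_g has a directed cycle of length greater than two, (2) f∘g has at most one fixed point, and (3) whenever f(g(i))=i, i is a source in G_g and g(i) is a source in G_f. Then the pair (f,g) is realizable in some metric space: there exists a metric space (X,d) and points A_1,…,A_n with all pairwise distances distinct, A_{f(i)} the nearest point to A_i and A_{g(i)} the farthest point from A_i for every i. -/
import Mathlib

open Function

open Classical in
/-- Depth of a point along the `f`-trajectory. -/
noncomputable def dep {n : ℕ} (f : Fin n → Fin n) (i : Fin n) : ℕ :=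
  if h : ∃ k, f (f (f^[k] i)) = f^[k] i then Nat.find h else 0

lemma dep_eq_zero {n : ℕ} {f : Fin n → Fin n} {i : Fin n} (h : f (f i) = i) :
    dep f i = 0 := by
  have hex : ∃ k, f (f (f^[k] i)) = f^[k] i := ⟨0, by simpa using h⟩
  rw [dep, dif_pos hex, Nat.find_eq_zero hex]
  simpa using h

lemma dep_ex {n : ℕ} {f : Fin n → Fin n}
    (hcyc : ∀ (i : Fin n) (k : ℕ), 0 < k → f^[k] i = i → f (f i) = i) (i : Fin n) :
    ∃ k, k ≤ n ∧ f (f (f^[k] i)) = f^[k] i := by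
  obtain ⟨a, b, hab, heq⟩ := Fintype.exists_ne_map_eq_of_card_lt
      (fun a : Fin (n+1) => f^[(a : ℕ)] i) (by simp)
  have hvne : (a : ℕ) ≠ (b : ℕ) := fun h => hab (Fin.ext h)
  rcases lt_or_gt_of_ne hvne with hlt | hlt
  · have ha := a.isLt
    refine ⟨a, by omega, ?_⟩
    have h1 : f^[(b:ℕ) - (a:ℕ)] (f^[(a:ℕ)] i) = f^[(a:ℕ)] i := by
      rw [← Function.iterate_add_apply]
      have hh : (b:ℕ) - (a:ℕ) + a = b := by omega
      rw [hh, ← heq]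
    exact hcyc _ _ (by omega) h1
  · have hb := b.isLt
    refine ⟨b, by omega, ?_⟩
    have h1 : f^[(a:ℕ) - (b:ℕ)] (f^[(b:ℕ)] i) = f^[(b:ℕ)] i := by
      rw [← Function.iterate_add_apply]
      have hh : (a:ℕ) - (b:ℕ) + b = a := by omega
      rw [hh, heq]
    exact hcyc _ _ (by omega) h1

lemma dep_le {n : ℕ} {f : Fin n → Fin n}
    (hcyc : ∀ (i : Fin n) (k : ℕ), 0 < k → f^[k] i = i → f (f i) = i) (i : Fin n) :
    dep f i ≤ n := by
  obtain ⟨k, hk, hP⟩ := dep_ex hcyc i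
  have hex : ∃ k, f (f (f^[k] i)) = f^[k] i := ⟨k, hP⟩
  rw [dep, dif_pos hex]
  exact le_trans (Nat.find_le hP) hk

lemma dep_succ {n : ℕ} {f : Fin n → Fin n}
    (hcyc : ∀ (i : Fin n) (k : ℕ), 0 < k → f^[k] i = i → f (f i) = i)
    {i : Fin n} (h : f (f i) ≠ i) : dep f i = dep f (f i) + 1 := by
  obtain ⟨k, -, hP⟩ := dep_ex hcyc i
  obtain ⟨k', -, hP'⟩ := dep_ex hcyc (f i)
  have hex : ∃ k, f (f (f^[k] i)) = f^[k] i := ⟨k, hP⟩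
  have hex' : ∃ k, f (f (f^[k] (f i))) = f^[k] (f i) := ⟨k', hP'⟩
  rw [dep, dep, dif_pos hex, dif_pos hex']
  have key : ∀ m, (f (f (f^[m+1] i)) = f^[m+1] i) ↔ (f (f (f^[m] (f i))) = f^[m] (f i)) := by
    intro m
    rw [Function.iterate_succ_apply]
  have hne : Nat.find hex ≠ 0 := by
    intro h0
    have hs := Nat.find_spec hex
    rw [h0] at hs
    simp only [Function.iterate_zero, id_eq] at hs
    exact h hs
  obtain ⟨m, hm⟩ := Nat.exists_eq_succ_of_ne_zero hne
  have hPm : f (f (f^[m] (f i))) = f^[m] (f i) := by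
    have hs := Nat.find_spec hex
    rw [hm] at hs
    exact (key m).mp hs
  have h1 : Nat.find hex' ≤ m := Nat.find_le hPm
  have h2 : ¬ (Nat.find hex' < m) := by
    intro hlt
    have hs' := Nat.find_spec hex'
    have hp : f (f (f^[Nat.find hex' + 1] i)) = f^[Nat.find hex' + 1] i := (key _).mpr hs'
    exact Nat.find_min hex (by omega) hp
  omega

section P2
variable {n : ℕ} (f g : Fin n → Fin n)

/-- Integer "level" of the edge `{i,j}`. -/
noncomputable def Sval (i j : Fin n) : ℕ :=
  if (f i = j ∨ f j = i) ∧ (g i = j ∨ g j = i) then n + 2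
  else if f i = j then dep f i
  else if f j = i then dep f j
  else if g i = j then 2*n + 4 - dep g i
  else if g j = i then 2*n + 4 - dep g j
  else if g (f i) = i ∨ g (f j) = j then n + 3
  else if f (g i) = i ∨ f (g j) = j then n + 1
  else n + 2

def idx (i j : Fin n) : ℕ := min i.val j.val * n + max i.val j.val

noncomputable def wt (i j : Fin n) : ℕ := Sval f g i j * n^2 + idx i j

variable {f g}

lemma Sval_symm (i j : Fin n) : Sval f g i j = Sval f g j i := by
  have dz : ∀ (h : Fin n → Fin n) (a b : Fin n), h a = b → h b = a → dep h a = dep h b := by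
    intro h a b hab hba
    rw [dep_eq_zero (by rw [hab, hba]), dep_eq_zero (by rw [hba, hab])]
  rw [Sval, Sval]
  split_ifs <;> first
    | rfl
    | tauto
    | exact dz f i j ‹f i = j› ‹f j = i›
    | exact dz g i j ‹g i = j› ‹g j = i›

lemma idx_symm (i j : Fin n) : idx i j = idx j i := by
  rw [idx, idx, min_comm, max_comm]

lemma wt_symm (i j : Fin n) : wt f g i j = wt f g j i := by
  rw [wt, wt, Sval_symm, idx_symm]

lemma idx_lt (i j : Fin n) : idx i j < n^2 := by
  have hi := i.isLt
  have hj := j.isLt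
  have h1 : min i.val j.val + 1 ≤ n := by omega
  have h2 : max i.val j.val < n := by omega
  calc min i.val j.val * n + max i.val j.val
      < min i.val j.val * n + n := by omega
    _ = (min i.val j.val + 1) * n := by ring
    _ ≤ n * n := Nat.mul_le_mul_right n h1
    _ = n^2 := (sq n).symm

lemma Sval_le
    (hcycf : ∀ (i : Fin n) (k : ℕ), 0 < k → f^[k] i = i → f (f i) = i)
    (hcycg : ∀ (i : Fin n) (k : ℕ), 0 < k → g^[k] i = i → g (g i) = i)
    (i j : Fin n) : Sval f g i j ≤ 2*n + 4 := by
  have d1 := dep_le hcycf i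
  have d2 := dep_le hcycf j
  rw [Sval]
  split_ifs <;> omega

lemma wt_lt
    (hcycf : ∀ (i : Fin n) (k : ℕ), 0 < k → f^[k] i = i → f (f i) = i)
    (hcycg : ∀ (i : Fin n) (k : ℕ), 0 < k → g^[k] i = i → g (g i) = i)
    (i j : Fin n) : wt f g i j < (2*n+5) * n^2 := by
  have h1 := Sval_le hcycf hcycg i j
  have h2 := idx_lt i j
  calc wt f g i j = Sval f g i j * n^2 + idx i j := rfl
    _ < Sval f g i j * n^2 + n^2 := by omega
    _ = (Sval f g i j + 1) * n^2 := by ring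
    _ ≤ (2*n+5) * n^2 := Nat.mul_le_mul_right _ (by omega)

lemma wt_lt_wt {i j s t : Fin n} (h : Sval f g i j < Sval f g s t) :
    wt f g i j < wt f g s t := by
  have h2 := idx_lt (n := n) i j
  calc wt f g i j = Sval f g i j * n^2 + idx i j := rfl
    _ < (Sval f g i j + 1) * n^2 := by nlinarith [sq_nonneg n]
    _ ≤ Sval f g s t * n^2 := Nat.mul_le_mul_right _ (by omega)
    _ ≤ wt f g s t := Nat.le_add_right _ _

end P2
section P3
variable {n : ℕ} {f g : Fin n → Fin n}

set_option maxHeartbeats 1000000 in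
lemma key_min
    (hf : ∀ i, f i ≠ i) (hg : ∀ i, g i ≠ i) (hfg : ∀ i, f i ≠ g i)
    (hcycf : ∀ (i : Fin n) (k : ℕ), 0 < k → f^[k] i = i → f (f i) = i)
    (hcycg : ∀ (i : Fin n) (k : ℕ), 0 < k → g^[k] i = i → g (g i) = i)
    (hone : ∀ i j : Fin n, f (g i) = i → f (g j) = j → i = j)
    (hsrc : ∀ i : Fin n, f (g i) = i →
      (∀ j : Fin n, g j ≠ i) ∧ (∀ j : Fin n, f j ≠ g i))
    (i j : Fin n) (hji : j ≠ i) (hjf : j ≠ f i) :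
    Sval f g i (f i) < Sval f g i j := by
  have dfle := dep_le hcycf
  have dgle := dep_le hcycg
  by_cases hC : g (f i) = i
  · -- special edge case: {i, f i} is both a nearest and a farthest edge
    have hLHS : Sval f g i (f i) = n + 2 := by
      rw [Sval, if_pos ⟨Or.inl rfl, Or.inr hC⟩]
    obtain ⟨Hg, Hf⟩ := hsrc (f i) (by rw [hC])
    rw [hC] at Hf
    rw [hLHS, Sval]
    split_ifs with h1 h2 h3 h4 h5 h6 h7
    · rcases h1.1 with h | h
      · exact absurd h.symm hjf
      · exact absurd h (Hf j)
    · exact absurd h2.symm hjf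
    · exact absurd h3 (Hf j)
    · have := dgle i; omega
    · have := dgle j; omega
    · omega
    · exact absurd (Or.inl hC) h6
    · exact absurd (Or.inl hC) h6
  · have hLHS : Sval f g i (f i) = dep f i := by
      rw [Sval, if_neg, if_pos rfl]
      rintro ⟨-, h | h⟩
      · exact hfg i h.symm
      · exact hC h
    have hdi := dfle i
    rw [hLHS, Sval]
    split_ifs with h1 h2 h3 h4 h5 h6 h7
    · omega
    · exact absurd h2.symm hjf
    · -- f j = i : edge {i,j} is the nearest edge of j, one level deeper
      have hne : f (f j) ≠ j := by
        rw [h3]; intro hh; exact hjf hh.symm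
      have : dep f j = dep f i + 1 := by
        rw [dep_succ hcycf hne, h3]
      omega
    · have := dgle i; omega
    · have := dgle j; omega
    · omega
    · omega
    · omega

set_option maxHeartbeats 1000000 in
lemma key_max
    (hf : ∀ i, f i ≠ i) (hg : ∀ i, g i ≠ i) (hfg : ∀ i, f i ≠ g i)
    (hcycf : ∀ (i : Fin n) (k : ℕ), 0 < k → f^[k] i = i → f (f i) = i)
    (hcycg : ∀ (i : Fin n) (k : ℕ), 0 < k → g^[k] i = i → g (g i) = i)
    (hone : ∀ i j : Fin n, f (g i) = i → f (g j) = j → i = j)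
    (hsrc : ∀ i : Fin n, f (g i) = i →
      (∀ j : Fin n, g j ≠ i) ∧ (∀ j : Fin n, f j ≠ g i))
    (i j : Fin n) (hji : j ≠ i) (hjg : j ≠ g i) :
    Sval f g i j < Sval f g i (g i) := by
  have dfle := dep_le hcycf
  have dgle := dep_le hcycg
  by_cases hD : f (g i) = i
  · have hLHS : Sval f g i (g i) = n + 2 := by
      rw [Sval, if_pos ⟨Or.inr hD, Or.inl rfl⟩]
    obtain ⟨Hg, Hf⟩ := hsrc i hD
    rw [hLHS, Sval]
    split_ifs with h1 h2 h3 h4 h5 h6 h7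
    · rcases h1.2 with h | h
      · exact absurd h.symm hjg
      · exact absurd h (Hg j)
    · have := dfle i; omega
    · have := dfle j; omega
    · exact absurd h4.symm hjg
    · exact absurd h5 (Hg j)
    · -- would-be neutral edge next to the special source vertex: impossible
      exfalso
      rcases h6 with h | h
      · exact Hg (f i) h
      · have hfix : f (g (f j)) = f j := by rw [h]
        have : f j = i := hone (f j) i hfix hD
        rw [this] at h
        exact hjg h.symm
    · omega
    · exact absurd (Or.inl hD) h7
  · have hLHS : Sval f g i (g i) = 2*n + 4 - dep g i := by
      have A : ¬((f i = g i ∨ f (g i) = i) ∧ (g i = g i ∨ g (g i) = i)) := by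
        rintro ⟨h | h, -⟩
        · exact hfg i h
        · exact hD h
      rw [Sval, if_neg A, if_neg (hfg i), if_neg hD, if_pos rfl]
    have hdi := dgle i
    rw [hLHS, Sval]
    split_ifs with h1 h2 h3 h4 h5 h6 h7
    · omega
    · have := dfle i; omega
    · have := dfle j; omega
    · exact absurd h4.symm hjg
    · have hne : g (g j) ≠ j := by
        rw [h5]; intro hh; exact hjg hh.symm
      have : dep g j = dep g i + 1 := by
        rw [dep_succ hcycg hne, h5]
      omega
    · omega
    · omega
    · omega

end P3
section P4

lemma digits_aux {a b c d n : ℕ} (hb : b < n) (hd : d < n)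
    (h : a * n + b = c * n + d) : a = c ∧ b = d := by
  have hn : 0 < n := by omega
  have hbd : b = d := by
    have h' : n * a + b = n * c + d := by
      rw [Nat.mul_comm n a, Nat.mul_comm n c]; exact h
    have h1 : b % n = d % n := by
      rw [← Nat.mul_add_mod n a b, ← Nat.mul_add_mod n c d, h']
    rwa [Nat.mod_eq_of_lt hb, Nat.mod_eq_of_lt hd] at h1
  subst hbd
  exact ⟨Nat.eq_of_mul_eq_mul_right hn (Nat.add_right_cancel h), rfl⟩

lemma idx_inj {n : ℕ} {i j s t : Fin n} (hij : i ≠ j) (hst : s ≠ t)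
    (h : idx i j = idx s t) : ({i, j} : Finset (Fin n)) = {s, t} := by
  have hi := i.isLt; have hj := j.isLt; have hs := s.isLt; have ht := t.isLt
  rw [idx, idx] at h
  obtain ⟨hmin, hmax⟩ := digits_aux (max_lt hi hj) (max_lt hs ht) h
  have hvij : i.val ≠ j.val := fun hh => hij (Fin.ext hh)
  have hvst : s.val ≠ t.val := fun hh => hst (Fin.ext hh)
  rcases lt_or_gt_of_ne hvij with h1 | h1 <;> rcases lt_or_gt_of_ne hvst with h2 | h2
  · rw [min_eq_left h1.le, min_eq_left h2.le] at hmin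
    rw [max_eq_right h1.le, max_eq_right h2.le] at hmax
    rw [Fin.ext hmin, Fin.ext hmax]
  · rw [min_eq_left h1.le, min_eq_right h2.le] at hmin
    rw [max_eq_right h1.le, max_eq_left h2.le] at hmax
    rw [Fin.ext hmin, Fin.ext hmax, Finset.pair_comm]
  · rw [min_eq_right h1.le, min_eq_left h2.le] at hmin
    rw [max_eq_left h1.le, max_eq_right h2.le] at hmax
    rw [Fin.ext hmin, Fin.ext hmax, Finset.pair_comm]
  · rw [min_eq_right h1.le, min_eq_right h2.le] at hmin
    rw [max_eq_left h1.le, max_eq_left h2.le] at hmax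
    rw [Fin.ext hmin, Fin.ext hmax]

/-- A bounded symmetric distance matrix with values in `[1,2]` off the diagonal
gives a metric space. -/
noncomputable def metricOf {X : Type} [DecidableEq X] (D : X → X → ℝ)
    (hself : ∀ i, D i i = 0)
    (hsym : ∀ i j, D i j = D j i)
    (h1 : ∀ i j, i ≠ j → 1 ≤ D i j)
    (h2 : ∀ i j, i ≠ j → D i j ≤ 2) : MetricSpace X where
  dist := D
  dist_self := hself
  dist_comm := hsym
  dist_triangle := by
    intro x y z
    show D x z ≤ D x y + D y z
    have hnn : ∀ a b : X, 0 ≤ D a b := by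
      intro a b
      by_cases hab : a = b
      · rw [hab, hself]
      · linarith [h1 a b hab]
    by_cases hxz : x = z
    · rw [hxz, hself z]
      have := hnn z y; have := hnn y z; linarith
    by_cases hxy : x = y
    · rw [hxy, hself y]; linarith [hnn y z]
    by_cases hyz : y = z
    · rw [hyz, hself z]; linarith [hnn x z]
    · linarith [h2 x z hxz, h1 x y hxy, h1 y z hyz]
  eq_of_dist_eq_zero := by
    intro x y hxy
    have hxy' : D x y = 0 := hxy
    by_contra hne
    have := h1 x y hne
    rw [hxy'] at this
    linarith

end P4
section P5
variable {n : ℕ} (f g : Fin n → Fin n)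

noncomputable def Dfun (i j : Fin n) : ℝ :=
  if i = j then 0 else 1 + (wt f g i j : ℝ) / (((2*n+5) * n^2 : ℕ) : ℝ)

variable {f g}

lemma Nr_pos (hn0 : 0 < n) : (0:ℝ) < (((2*n+5) * n^2 : ℕ) : ℝ) := by
  have : 0 < (2*n+5) * n^2 := Nat.mul_pos (by omega) (by positivity)
  exact_mod_cast this

lemma Dfun_self (i : Fin n) : Dfun f g i i = 0 := if_pos rfl

lemma Dfun_symm (i j : Fin n) : Dfun f g i j = Dfun f g j i := by
  rw [Dfun, Dfun]
  by_cases h : i = j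
  · rw [if_pos h, if_pos h.symm]
  · rw [if_neg h, if_neg (fun hh => h hh.symm), wt_symm]

lemma Dfun_one_le (hn0 : 0 < n) {i j : Fin n} (h : i ≠ j) : 1 ≤ Dfun f g i j := by
  rw [Dfun, if_neg h]
  have := Nr_pos (n := n) hn0
  have h2 : (0:ℝ) ≤ (wt f g i j : ℝ) / (((2*n+5) * n^2 : ℕ) : ℝ) :=
    div_nonneg (Nat.cast_nonneg _) this.le
  linarith

lemma Dfun_le_two (hn0 : 0 < n)
    (hcycf : ∀ (i : Fin n) (k : ℕ), 0 < k → f^[k] i = i → f (f i) = i)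
    (hcycg : ∀ (i : Fin n) (k : ℕ), 0 < k → g^[k] i = i → g (g i) = i)
    {i j : Fin n} (h : i ≠ j) : Dfun f g i j ≤ 2 := by
  rw [Dfun, if_neg h]
  have hN := Nr_pos (n := n) hn0
  have hw : (wt f g i j : ℝ) ≤ (((2*n+5) * n^2 : ℕ) : ℝ) := by
    exact_mod_cast (wt_lt hcycf hcycg i j).le
  have := (div_le_one hN).mpr hw
  linarith

lemma Dfun_lt_Dfun (hn0 : 0 < n) {i j s t : Fin n} (hij : i ≠ j) (hst : s ≠ t)
    (h : wt f g i j < wt f g s t) : Dfun f g i j < Dfun f g s t := by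
  rw [Dfun, Dfun, if_neg hij, if_neg hst]
  have hN := Nr_pos (n := n) hn0
  have : (wt f g i j : ℝ) < (wt f g s t : ℝ) := by exact_mod_cast h
  have := div_lt_div_of_pos_right this hN
  linarith

lemma Dfun_eq_wt_eq (hn0 : 0 < n) {i j s t : Fin n} (hij : i ≠ j) (hst : s ≠ t)
    (h : Dfun f g i j = Dfun f g s t) : wt f g i j = wt f g s t := by
  rw [Dfun, Dfun, if_neg hij, if_neg hst] at h
  have hN := Nr_pos (n := n) hn0
  have h1 : (wt f g i j : ℝ) / (((2*n+5) * n^2 : ℕ) : ℝ)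
      = (wt f g s t : ℝ) / (((2*n+5) * n^2 : ℕ) : ℝ) := by linarith
  rw [div_eq_div_iff hN.ne' hN.ne'] at h1
  have h2 : (wt f g i j : ℝ) = (wt f g s t : ℝ) := mul_right_cancel₀ hN.ne' h1
  exact_mod_cast h2

end P5

/-- If `n ≥ 3` and `f, g : Fin n → Fin n` are fixed-point-free with `f i ≠ g i`,
the functional graphs of `f` and `g` have no directed cycles of length greater than two,
`f ∘ g` has at most one fixed point, and whenever `f (g i) = i` the vertex `i` is a source
in `G_g` and `g i` is a source in `G_f`, then the pair `(f, g)` is realizable in some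
metric space. -/
theorem stmt5 (n : ℕ) (hn : 3 ≤ n) (f g : Fin n → Fin n)
    (hf : ∀ i, f i ≠ i) (hg : ∀ i, g i ≠ i) (hfg : ∀ i, f i ≠ g i)
    (hcycf : ∀ (i : Fin n) (k : ℕ), 0 < k → f^[k] i = i → f (f i) = i)
    (hcycg : ∀ (i : Fin n) (k : ℕ), 0 < k → g^[k] i = i → g (g i) = i)
    (hone : ∀ i j : Fin n, f (g i) = i → f (g j) = j → i = j)
    (hsrc : ∀ i : Fin n, f (g i) = i →
      (∀ j : Fin n, g j ≠ i) ∧ (∀ j : Fin n, f j ≠ g i)) :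
    ∃ (X : Type) (_ : MetricSpace X) (A : Fin n → X),
      (∀ i j s t : Fin n, i ≠ j → s ≠ t →
        ({i, j} : Finset (Fin n)) ≠ {s, t} → dist (A i) (A j) ≠ dist (A s) (A t)) ∧
      (∀ i j : Fin n, j ≠ i → j ≠ f i → dist (A i) (A (f i)) < dist (A i) (A j)) ∧
      (∀ i j : Fin n, j ≠ i → j ≠ g i → dist (A i) (A j) < dist (A i) (A (g i))) := by
  have hn0 : 0 < n := by omega
  refine ⟨Fin n,
    metricOf (Dfun f g) Dfun_self Dfun_symm
      (fun i j h => Dfun_one_le hn0 h)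
      (fun i j h => Dfun_le_two hn0 hcycf hcycg h),
    id, ?_, ?_, ?_⟩
  · intro i j s t hij hst hpair heq
    have heq' : Dfun f g i j = Dfun f g s t := heq
    have hw := Dfun_eq_wt_eq hn0 hij hst heq'
    rw [wt, wt] at hw
    obtain ⟨-, hidx⟩ := digits_aux (idx_lt i j) (idx_lt s t) hw
    exact hpair (idx_inj hij hst hidx)
  · intro i j hji hjf
    show Dfun f g i (f i) < Dfun f g i j
    exact Dfun_lt_Dfun hn0 (fun h => hf i h.symm) (fun h => hji h.symm)
      (wt_lt_wt (key_min hf hg hfg hcycf hcycg hone hsrc i j hji hjf))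
  · intro i j hji hjg
    show Dfun f g i j < Dfun f g i (g i)
    exact Dfun_lt_Dfun hn0 (fun h => hji h.symm) (fun h => hg i h.symm)
      (wt_lt_wt (key_max hf hg hfg hcycf hcycg hone hsrc i j hji hjg))
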